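/- Let P be Lebesgue measure on [0,1] and A_{2^{i−1}+k} = [k/2^i, (k+1)/2^i] ∪ [1/2, 1] for i ≥ 1, 0 ≤ k < 2^{i−1}. Then for every strictly increasing τ: ℕ → ℕ, lim_{p→0+} limsup_{n→∞} E[((∑_{i=1}^n 1_{A_{τ(i)}})/(∑_{i=1}^n P(A_{τ(i)})))^p] ≤ 1/2. -/

import Mathlib

open MeasureTheory Filter Set Topology

/-- For `n = 2^(i-1) + k` with `i ≥ 1` and `0 ≤ k < 2^(i-1)`, the event
`A_n = [k/2^i, (k+1)/2^i] ∪ [1/2, 1]`. Here `Nat.log 2 n = i - 1`. -/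
noncomputable def dyadicA (n : ℕ) : Set ℝ :=
  Set.Icc (((n : ℝ) - 2 ^ Nat.log 2 n) / 2 ^ (Nat.log 2 n + 1))
      (((n : ℝ) - 2 ^ Nat.log 2 n + 1) / 2 ^ (Nat.log 2 n + 1)) ∪
    Set.Icc (1 / 2 : ℝ) 1

/-- The small dyadic interval part. -/
noncomputable def dyadicI (n : ℕ) : Set ℝ :=
  Set.Icc (((n : ℝ) - 2 ^ Nat.log 2 n) / 2 ^ (Nat.log 2 n + 1))
      (((n : ℝ) - 2 ^ Nat.log 2 n + 1) / 2 ^ (Nat.log 2 n + 1))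

lemma dyadicA_eq (n : ℕ) : dyadicA n = dyadicI n ∪ Set.Icc (1/2 : ℝ) 1 := rfl

lemma dyadicA_meas (n : ℕ) : MeasurableSet (dyadicA n) :=
  measurableSet_Icc.union measurableSet_Icc

lemma half_le_measA (m : ℕ) :
    (1:ℝ)/2 ≤ ((volume.restrict (Set.Icc (0:ℝ) 1)) (dyadicA m)).toReal := by
  have h1 : (volume.restrict (Set.Icc (0:ℝ) 1)) (Set.Icc (1/2:ℝ) 1) = ENNReal.ofReal (1/2) := by
    rw [Measure.restrict_apply measurableSet_Icc,
      inter_eq_left.mpr (Set.Icc_subset_Icc (by norm_num) le_rfl), Real.volume_Icc]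
    norm_num
  have h2 : (volume.restrict (Set.Icc (0:ℝ) 1)) (Set.Icc (1/2:ℝ) 1)
      ≤ (volume.restrict (Set.Icc (0:ℝ) 1)) (dyadicA m) :=
    measure_mono (subset_union_right)
  have h3 : (volume.restrict (Set.Icc (0:ℝ) 1)) (dyadicA m) ≠ ⊤ := by
    refine ne_top_of_le_ne_top ?_ (measure_mono (subset_univ _))
    rw [Measure.restrict_apply_univ, Real.volume_Icc]
    exact ENNReal.ofReal_ne_top
  have := ENNReal.toReal_mono h3 h2
  rwa [h1, ENNReal.toReal_ofReal (by norm_num)] at this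

lemma measI_le (m : ℕ) (hm : 1 ≤ m) :
    ((volume.restrict (Set.Icc (0:ℝ) 1)) (dyadicI m)).toReal ≤ 1/(m:ℝ) := by
  have hlt : (m:ℝ) < 2 ^ (Nat.log 2 m + 1) := by
    have := Nat.lt_pow_succ_log_self (by norm_num : 1 < 2) m
    exact_mod_cast this
  have hmpos : (0:ℝ) < m := by exact_mod_cast hm
  have hvol : volume (dyadicI m) = ENNReal.ofReal ((2:ℝ)^(Nat.log 2 m + 1))⁻¹ := by
    rw [dyadicI, Real.volume_Icc]
    congr 1
    field_simp
    ring
  have h2 : (volume.restrict (Set.Icc (0:ℝ) 1)) (dyadicI m) ≤ volume (dyadicI m) := by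
    rw [dyadicI, Measure.restrict_apply measurableSet_Icc, ← dyadicI]
    exact measure_mono inter_subset_left
  have h3 := ENNReal.toReal_mono (by rw [hvol]; exact ENNReal.ofReal_ne_top) h2
  rw [hvol, ENNReal.toReal_ofReal (by positivity)] at h3
  refine h3.trans ?_
  rw [one_div]
  exact inv_anti₀ hmpos hlt.le

lemma rpow_key {r δ p : ℝ} (hp : 0 < p) (hδ : 0 < δ) (hr : 0 ≤ r) (hr2 : r ≤ 2) :
    r ^ p ≤ δ ^ p + 2 ^ p / δ * r := by
  have h2p : (0:ℝ) ≤ 2 ^ p := Real.rpow_nonneg (by norm_num) p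
  rcases le_or_gt r δ with h | h
  · have h1 : r ^ p ≤ δ ^ p := Real.rpow_le_rpow hr h hp.le
    have h2 : 0 ≤ 2 ^ p / δ * r := mul_nonneg (div_nonneg h2p hδ.le) hr
    linarith
  · have h1 : r ^ p ≤ 2 ^ p := Real.rpow_le_rpow hr hr2 hp.le
    have h2 : (2:ℝ) ^ p = 2 ^ p / δ * δ := by field_simp
    have h3 : 2 ^ p / δ * δ ≤ 2 ^ p / δ * r :=
      mul_le_mul_of_nonneg_left h.le (div_nonneg h2p hδ.le)
    have h4 : 0 ≤ δ ^ p := Real.rpow_nonneg hδ.le p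
    linarith

lemma ind_nonneg (s : Set ℝ) (x : ℝ) : 0 ≤ s.indicator (1 : ℝ → ℝ) x :=
  Set.indicator_nonneg (fun _ _ => zero_le_one) x

lemma ind_le_one (s : Set ℝ) (x : ℝ) : s.indicator (1 : ℝ → ℝ) x ≤ 1 :=
  Set.indicator_apply_le' (fun _ => le_rfl) (fun _ => zero_le_one)

lemma dyadicI_meas (n : ℕ) : MeasurableSet (dyadicI n) := measurableSet_Icc

lemma main_bound (τ : ℕ → ℕ) (hτ : StrictMono τ) (hτ1 : ∀ n, 1 ≤ τ n)
    {n : ℕ} (hn : 1 ≤ n) {p δ : ℝ} (hp : 0 < p) (hδ : 0 < δ) :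
    (∫ x, ((∑ i ∈ Finset.Icc 1 n, (dyadicA (τ i)).indicator (1 : ℝ → ℝ) x) /
          (∑ i ∈ Finset.Icc 1 n,
            ((volume.restrict (Set.Icc (0 : ℝ) 1)) (dyadicA (τ i))).toReal)) ^ p
        ∂(volume.restrict (Set.Icc (0 : ℝ) 1)))
      ≤ 2^p/2 + δ^p + 2^p/δ * ((∑ i ∈ Finset.Icc 1 n, 1/(i:ℝ)) / ((n:ℝ)/2)) := by
  set μ := volume.restrict (Set.Icc (0:ℝ) 1) with hμdef
  haveI : IsFiniteMeasure μ :=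
    ⟨by rw [hμdef, Measure.restrict_apply_univ, Real.volume_Icc]; exact ENNReal.ofReal_lt_top⟩
  set m := ∑ i ∈ Finset.Icc 1 n, (μ (dyadicA (τ i))).toReal with hmdef
  have hcard : (Finset.Icc 1 n).card = n := by rw [Nat.card_Icc]; omega
  have hnpos : (0:ℝ) < n := by exact_mod_cast hn
  have hm : (n:ℝ)/2 ≤ m := by
    have h := Finset.sum_le_sum (f := fun _ => (1/2:ℝ))
      (g := fun i => (μ (dyadicA (τ i))).toReal)
      (fun i (_ : i ∈ Finset.Icc 1 n) => half_le_measA (τ i))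
    rwa [Finset.sum_const, hcard, nsmul_eq_mul, mul_one_div] at h
  have hm0 : (0:ℝ) < m := lt_of_lt_of_le (by positivity) hm
  set S : ℝ → ℝ := fun x => ∑ i ∈ Finset.Icc 1 n, (dyadicA (τ i)).indicator (1:ℝ→ℝ) x
    with hSdef
  set S' : ℝ → ℝ := fun x => ∑ i ∈ Finset.Icc 1 n, (dyadicI (τ i)).indicator (1:ℝ→ℝ) x
    with hS'def
  have h2p : (0:ℝ) ≤ 2 ^ p := Real.rpow_nonneg (by norm_num) p
  have hS0 : ∀ x, 0 ≤ S x := fun x => Finset.sum_nonneg fun i _ => ind_nonneg _ x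
  have hS'0 : ∀ x, 0 ≤ S' x := fun x => Finset.sum_nonneg fun i _ => ind_nonneg _ x
  have hSn : ∀ x, S x ≤ n := by
    intro x
    have := Finset.sum_le_sum (f := fun i => (dyadicA (τ i)).indicator (1:ℝ→ℝ) x)
      (g := fun _ => (1:ℝ)) (fun i (_ : i ∈ Finset.Icc 1 n) => ind_le_one _ x)
    rwa [Finset.sum_const, hcard, nsmul_eq_mul, mul_one] at this
  have hr0 : ∀ x, 0 ≤ S x / m := fun x => div_nonneg (hS0 x) hm0.le
  have hr2 : ∀ x, S x / m ≤ 2 := by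
    intro x
    rw [div_le_iff₀ hm0]
    have := hSn x
    linarith
  have hSS' : ∀ x, x < 1/2 → S x ≤ S' x := by
    intro x hx
    apply Finset.sum_le_sum
    intro i _
    by_cases h : x ∈ dyadicA (τ i)
    · have hxI : x ∈ dyadicI (τ i) := by
        rcases h with h | h
        · exact h
        · exact absurd h.1 (by linarith)
      rw [Set.indicator_of_mem h, Set.indicator_of_mem hxI]
    · rw [Set.indicator_of_notMem h]
      exact ind_nonneg _ x
  set g : ℝ → ℝ := fun x => δ^p + 2^p/δ * (S' x / m) +
      (Set.Icc (1/2:ℝ) 1).indicator (fun _ => (2:ℝ)^p) x with hgdef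
  have hpt : ∀ x ∈ Set.Icc (0:ℝ) 1, (S x / m) ^ p ≤ g x := by
    intro x hx
    by_cases hx2 : x ∈ Set.Icc (1/2:ℝ) 1
    · have h1 : (S x/m)^p ≤ 2^p := Real.rpow_le_rpow (hr0 x) (hr2 x) hp.le
      have h3 : 0 ≤ δ^p := Real.rpow_nonneg hδ.le p
      have h4 : 0 ≤ 2^p/δ * (S' x / m) :=
        mul_nonneg (div_nonneg h2p hδ.le) (div_nonneg (hS'0 x) hm0.le)
      rw [hgdef]
      simp only [Set.indicator_of_mem hx2]
      linarith
    · have hxlt : x < 1/2 := by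
        rcases hx with ⟨hx0, hx1⟩
        by_contra hcon
        push_neg at hcon
        exact hx2 ⟨hcon, hx1⟩
      have h1 := rpow_key hp hδ (hr0 x) (hr2 x)
      have h2 : S x / m ≤ S' x / m := (div_le_div_iff_of_pos_right hm0).mpr (hSS' x hxlt)
      have h3 : 2^p/δ * (S x/m) ≤ 2^p/δ * (S' x/m) :=
        mul_le_mul_of_nonneg_left h2 (div_nonneg h2p hδ.le)
      rw [hgdef]
      simp only [Set.indicator_of_notMem hx2]
      linarith
  have hSmeas : Measurable S :=
    Finset.measurable_sum _ fun i _ => measurable_one.indicator (dyadicA_meas (τ i))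
  have hfmeas : Measurable (fun x => (S x / m) ^ p) :=
    (Real.continuous_rpow_const hp.le).measurable.comp (hSmeas.div_const m)
  have hfint : Integrable (fun x => (S x / m) ^ p) μ := by
    refine (integrable_const ((2:ℝ)^p)).mono' hfmeas.aestronglyMeasurable (ae_of_all _ ?_)
    intro x
    rw [Real.norm_eq_abs, abs_of_nonneg (Real.rpow_nonneg (hr0 x) p)]
    exact Real.rpow_le_rpow (hr0 x) (hr2 x) hp.le
  have hS'int : Integrable S' μ :=
    integrable_finset_sum _ fun i _ => (integrable_const (1:ℝ)).indicator (dyadicI_meas (τ i))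
  have hmid : Integrable (fun x => 2^p/δ * (S' x / m)) μ := (hS'int.div_const m).const_mul _
  have hindint : Integrable ((Set.Icc (1/2:ℝ) 1).indicator (fun _ => (2:ℝ)^p)) μ :=
    (integrable_const _).indicator measurableSet_Icc
  have hgint : Integrable g μ := ((integrable_const (δ^p)).add hmid).add hindint
  have hle : (∫ x, (S x / m) ^ p ∂μ) ≤ ∫ x, g x ∂μ := by
    refine integral_mono_ae hfint hgint ?_
    filter_upwards [ae_restrict_mem measurableSet_Icc] with x hx using hpt x hx
  have hμuniv : (μ Set.univ).toReal = 1 := by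
    rw [hμdef, Measure.restrict_apply_univ, Real.volume_Icc]
    norm_num
  have hμhalf : (μ (Set.Icc (1/2:ℝ) 1)).toReal = 1/2 := by
    rw [hμdef, Measure.restrict_apply measurableSet_Icc,
      inter_eq_left.mpr (Set.Icc_subset_Icc (by norm_num) le_rfl), Real.volume_Icc]
    rw [show (1:ℝ) - 1/2 = 1/2 by norm_num, ENNReal.toReal_ofReal (by norm_num)]
  have hS'sum : (∫ x, S' x ∂μ) = ∑ i ∈ Finset.Icc 1 n, (μ (dyadicI (τ i))).toReal :=
    calc (∫ x, S' x ∂μ)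
        = ∑ i ∈ Finset.Icc 1 n, ∫ x, (dyadicI (τ i)).indicator (1:ℝ→ℝ) x ∂μ :=
          integral_finset_sum _
            (fun i _ => (integrable_const (1:ℝ)).indicator (dyadicI_meas (τ i)))
      _ = ∑ i ∈ Finset.Icc 1 n, (μ (dyadicI (τ i))).toReal :=
          Finset.sum_congr rfl fun i _ => integral_indicator_one (dyadicI_meas (τ i))
  have hH : ∑ i ∈ Finset.Icc 1 n, (μ (dyadicI (τ i))).toReal
      ≤ ∑ i ∈ Finset.Icc 1 n, 1/(i:ℝ) := by
    apply Finset.sum_le_sum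
    intro i hi
    have hi1 : 1 ≤ i := (Finset.mem_Icc.mp hi).1
    have h1 : ((μ (dyadicI (τ i))).toReal) ≤ 1/((τ i : ℕ):ℝ) := measI_le (τ i) (hτ1 i)
    refine h1.trans ?_
    have : (i:ℝ) ≤ (τ i : ℝ) := by exact_mod_cast hτ.le_apply
    apply one_div_le_one_div_of_le (by exact_mod_cast hi1) this
  have e1 : (∫ x, g x ∂μ) = (∫ x, (δ^p + 2^p/δ * (S' x / m)) ∂μ) +
      ∫ x, (Set.Icc (1/2:ℝ) 1).indicator (fun _ => (2:ℝ)^p) x ∂μ :=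
    integral_add ((integrable_const (δ^p)).add hmid) hindint
  have e2 : (∫ x, (δ^p + 2^p/δ * (S' x / m)) ∂μ)
      = (∫ _x, (δ^p : ℝ) ∂μ) + ∫ x, 2^p/δ * (S' x / m) ∂μ :=
    integral_add (integrable_const (δ^p)) hmid
  have e3 : (∫ _x, (δ^p : ℝ) ∂μ) = δ^p := by
    rw [integral_const, measureReal_def, hμuniv, one_smul]
  have e4 : (∫ x, 2^p/δ * (S' x / m) ∂μ) = 2^p/δ * ((∫ x, S' x ∂μ) / m) := by
    rw [integral_const_mul, integral_div]
  have e5 : (∫ x, (Set.Icc (1/2:ℝ) 1).indicator (fun _ => (2:ℝ)^p) x ∂μ) = 2^p * (1/2) := by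
    rw [integral_indicator_const _ measurableSet_Icc, measureReal_def, hμhalf]
    rw [smul_eq_mul, mul_comm]
  have hgval : (∫ x, g x ∂μ) = δ^p + 2^p/δ * ((∫ x, S' x ∂μ) / m) + 2^p * (1/2) := by
    rw [e1, e2, e3, e4, e5]
  have hfrac : (∫ x, S' x ∂μ) / m ≤ (∑ i ∈ Finset.Icc 1 n, 1/(i:ℝ)) / ((n:ℝ)/2) := by
    rw [hS'sum]
    refine div_le_div₀ (Finset.sum_nonneg fun i hi => by positivity) hH (by positivity) hm
  have h5 : 2^p/δ * ((∫ x, S' x ∂μ) / m)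
      ≤ 2^p/δ * ((∑ i ∈ Finset.Icc 1 n, 1/(i:ℝ)) / ((n:ℝ)/2)) :=
    mul_le_mul_of_nonneg_left hfrac (div_nonneg h2p hδ.le)
  calc (∫ x, (S x / m) ^ p ∂μ) ≤ ∫ x, g x ∂μ := hle
    _ = δ^p + 2^p/δ * ((∫ x, S' x ∂μ) / m) + 2^p * (1/2) := hgval
    _ ≤ 2^p/2 + δ^p + 2^p/δ * ((∑ i ∈ Finset.Icc 1 n, 1/(i:ℝ)) / ((n:ℝ)/2)) := by linarith

lemma limsup_bound (τ : ℕ → ℕ) (hτ : StrictMono τ) (hτ1 : ∀ n, 1 ≤ τ n)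
    {p δ : ℝ} (hp : 0 < p) (hδ : 0 < δ) :
    Filter.limsup (fun n =>
      ∫ x, ((∑ i ∈ Finset.Icc 1 n, (dyadicA (τ i)).indicator (1 : ℝ → ℝ) x) /
            (∑ i ∈ Finset.Icc 1 n,
              ((volume.restrict (Set.Icc (0 : ℝ) 1)) (dyadicA (τ i))).toReal)) ^ p
          ∂(volume.restrict (Set.Icc (0 : ℝ) 1))) atTop ≤ 2^p/2 + δ^p := by
  set F : ℕ → ℝ := fun n =>
      ∫ x, ((∑ i ∈ Finset.Icc 1 n, (dyadicA (τ i)).indicator (1 : ℝ → ℝ) x) /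
            (∑ i ∈ Finset.Icc 1 n,
              ((volume.restrict (Set.Icc (0 : ℝ) 1)) (dyadicA (τ i))).toReal)) ^ p
          ∂(volume.restrict (Set.Icc (0 : ℝ) 1)) with hFdef
  set G : ℕ → ℝ := fun n =>
      2^p/2 + δ^p + 2^p/δ * ((∑ i ∈ Finset.Icc 1 n, 1/(i:ℝ)) / ((n:ℝ)/2)) with hGdef
  have hFG : ∀ᶠ n in atTop, F n ≤ G n := by
    filter_upwards [eventually_ge_atTop 1] with n hn
    exact main_bound τ hτ hτ1 hn hp hδ
  have hF0 : ∀ n, 0 ≤ F n := fun n => integral_nonneg fun x =>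
    Real.rpow_nonneg (div_nonneg (Finset.sum_nonneg fun i _ => ind_nonneg _ x)
      (Finset.sum_nonneg fun i _ => ENNReal.toReal_nonneg)) p
  have hHn : Tendsto (fun n : ℕ => (∑ i ∈ Finset.Icc 1 n, 1/(i:ℝ)) / ((n:ℝ)/2))
      atTop (𝓝 0) := by
    have hu : Tendsto (fun i : ℕ => 1/((i:ℝ)+1)) atTop (𝓝 0) :=
      tendsto_one_div_add_atTop_nhds_zero_nat
    have hces := hu.cesaro
    have heq : (fun n : ℕ => (∑ i ∈ Finset.Icc 1 n, 1/(i:ℝ)) / ((n:ℝ)/2))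
        = fun n : ℕ => 2 * (((n:ℝ))⁻¹ * ∑ i ∈ Finset.range n, 1/((i:ℝ)+1)) := by
      funext n
      have hsum : ∑ i ∈ Finset.Icc 1 n, 1/(i:ℝ) = ∑ i ∈ Finset.range n, 1/((i:ℝ)+1) := by
        rw [← Finset.Ico_add_one_right_eq_Icc, Finset.sum_Ico_eq_sum_range]
        refine Finset.sum_congr rfl fun i _ => ?_
        push_cast
        rw [add_comm]
      rw [hsum]
      rcases eq_or_ne n 0 with rfl | hn
      · simp
      · have hne : ((n:ℝ)) ≠ 0 := Nat.cast_ne_zero.mpr hn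
        field_simp
    rw [heq]
    have h2 := hces.const_mul (2:ℝ)
    simpa using h2
  have hGlim : Tendsto G atTop (𝓝 (2^p/2 + δ^p)) := by
    have h := (hHn.const_mul ((2:ℝ)^p/δ)).const_add (2^p/2 + δ^p)
    simp only [mul_zero, add_zero] at h
    exact h.congr fun n => by rw [hGdef]
  calc Filter.limsup F atTop ≤ Filter.limsup G atTop :=
      limsup_le_limsup hFG (isCoboundedUnder_le_of_le atTop (x := 0) hF0)
        hGlim.isBoundedUnder_le
    _ = 2^p/2 + δ^p := hGlim.limsup_eq

theorem dyadic_MS_subsequence_le_half (τ : ℕ → ℕ) (hτ : StrictMono τ)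
    (hτ1 : ∀ n, 1 ≤ τ n) (L : ℝ)
    (hL : Tendsto (fun p : ℝ =>
        Filter.limsup (fun n =>
          ∫ x, ((∑ i ∈ Finset.Icc 1 n, (dyadicA (τ i)).indicator (1 : ℝ → ℝ) x) /
                (∑ i ∈ Finset.Icc 1 n,
                  ((volume.restrict (Set.Icc (0 : ℝ) 1)) (dyadicA (τ i))).toReal)) ^ p
              ∂(volume.restrict (Set.Icc (0 : ℝ) 1))) atTop)
      (nhdsWithin 0 (Set.Ioi 0)) (nhds L)) :
    L ≤ 1 / 2 := by
  have hbound : ∀ p : ℝ, 0 < p →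
      Filter.limsup (fun n =>
          ∫ x, ((∑ i ∈ Finset.Icc 1 n, (dyadicA (τ i)).indicator (1 : ℝ → ℝ) x) /
                (∑ i ∈ Finset.Icc 1 n,
                  ((volume.restrict (Set.Icc (0 : ℝ) 1)) (dyadicA (τ i))).toReal)) ^ p
              ∂(volume.restrict (Set.Icc (0 : ℝ) 1))) atTop ≤ 2^p/2 := by
    intro p hp
    refine le_of_forall_pos_le_add ?_
    intro ε hε
    have hδ : (0:ℝ) < ε ^ p⁻¹ := Real.rpow_pos_of_pos hε _
    have h := limsup_bound τ hτ hτ1 hp hδ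
    rwa [Real.rpow_inv_rpow hε.le hp.ne'] at h
  have htend2 : Tendsto (fun p : ℝ => (2:ℝ)^p/2) (nhdsWithin 0 (Set.Ioi 0)) (𝓝 (1/2)) := by
    have h1 : ContinuousAt (fun p : ℝ => (2:ℝ)^p) 0 :=
      Real.continuousAt_const_rpow (by norm_num)
    have h2 : Tendsto (fun p : ℝ => (2:ℝ)^p/2) (nhdsWithin 0 (Set.Ioi 0))
        (𝓝 ((2:ℝ)^(0:ℝ)/2)) :=
      (h1.tendsto.mono_left nhdsWithin_le_nhds).div_const 2
    rw [Real.rpow_zero] at h2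
    exact h2
  exact le_of_tendsto_of_tendsto hL htend2
    (by filter_upwards [self_mem_nhdsWithin] with p hp using hbound p hp)
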